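/- Let U ⊆ {y ∈ ℝ⁴ : y₁ y₂ y₃ y₄ ≠ 0} be open, let ψ : U → ℝ be twice continuously differentiable and R : U → ℝ a function, and suppose that for each i ∈ {1,2,3,4} the equation y_i ∂²ψ/∂y_i² = −ψ − (2 y_i + 1) ∂ψ/∂y_i − 2 Σ_{k ≠ i} y_k ∂ψ/∂y_k − 16 R holds on U. Then on U: (a) R = −(1/64) Σ_{i=1}^{4} ( y_i ∂²ψ/∂y_i² + (8 y_i + 1) ∂ψ/∂y_i + ψ ); and (b) for all i, j ∈ {1,2,3,4}: y_i ∂²ψ/∂y_i² + ∂ψ/∂y_i = y_j ∂²ψ/∂y_j² + ∂ψ/∂y_j, so that R can be eliminated and ψ alone satisfies the symmetric second-order Picard–Fuchs relations. -/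
import Mathlib


/-- The partial derivative `∂f/∂yᵢ` of a function of four real variables. -/
noncomputable def pderiv (i : Fin 4) (f : (Fin 4 → ℝ) → ℝ) (y : Fin 4 → ℝ) : ℝ :=
  deriv (fun t => f (Function.update y i t)) (y i)

/-- If `ψ` is a twice continuously differentiable function on an open set
`U ⊆ {y : y₁y₂y₃y₄ ≠ 0}` satisfying, for each `i`,
`yᵢ ∂²ψ/∂yᵢ² = -ψ - (2yᵢ+1)∂ψ/∂yᵢ - 2∑_{k≠i} y_k ∂ψ/∂y_k - 16 R`, then on `U`:
(a) `R = -(1/64) ∑ᵢ ( yᵢ ∂²ψ/∂yᵢ² + (8yᵢ+1)∂ψ/∂yᵢ + ψ )`, and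
(b) `yᵢ ∂²ψ/∂yᵢ² + ∂ψ/∂yᵢ = y_j ∂²ψ/∂y_j² + ∂ψ/∂y_j` for all `i, j`, so that `R` can be
eliminated and `ψ` alone satisfies the symmetric second-order Picard–Fuchs relations. -/
theorem eliminate_R_from_system (U : Set (Fin 4 → ℝ)) (hUopen : IsOpen U)
    (hUne : ∀ y ∈ U, y 0 * y 1 * y 2 * y 3 ≠ 0)
    (ψ R : (Fin 4 → ℝ) → ℝ) (hψ : ContDiffOn ℝ 2 ψ U)
    (heq : ∀ y ∈ U, ∀ i : Fin 4,
      y i * pderiv i (pderiv i ψ) y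
        = -ψ y - (2 * y i + 1) * pderiv i ψ y
          - 2 * ∑ k ∈ Finset.univ.erase i, y k * pderiv k ψ y - 16 * R y) :
    (∀ y ∈ U, R y = -(1 / 64) * ∑ i, (y i * pderiv i (pderiv i ψ) y
        + (8 * y i + 1) * pderiv i ψ y + ψ y)) ∧
    (∀ y ∈ U, ∀ i j : Fin 4,
      y i * pderiv i (pderiv i ψ) y + pderiv i ψ y
        = y j * pderiv j (pderiv j ψ) y + pderiv j ψ y) := by

  have key : ∀ y ∈ U, ∀ i : Fin 4,
      y i * pderiv i (pderiv i ψ) y + pderiv i ψ y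
        = -ψ y - 2 * (∑ k, y k * pderiv k ψ y) - 16 * R y := by
    intro y hy i
    have h := heq y hy i
    have hs : ∑ k ∈ Finset.univ.erase i, y k * pderiv k ψ y
        = (∑ k, y k * pderiv k ψ y) - y i * pderiv i ψ y := by
      rw [eq_sub_iff_add_eq, Finset.sum_erase_add _ _ (Finset.mem_univ i)]
    rw [hs] at h
    linarith [h]
  constructor
  · intro y hy
    have k0 := key y hy 0
    have k1 := key y hy 1
    have k2 := key y hy 2
    have k3 := key y hy 3
    simp only [Fin.sum_univ_four] at k0 k1 k2 k3 ⊢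
    linarith
  · intro y hy i j
    rw [key y hy i, key y hy j]
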